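/- arXiv:1510.04889 — 2 statements merged into one kernel-verified Lean document; each statement's English description precedes it below -/
import Mathlib

section
/- Let A be a smooth ℂ-algebra, B = A⊗A⊗A with S₃ permuting the tensor factors, and J₃ = I₁₂ ∩ I₁₃ ∩ I₂₃. Let r : B^{S₃} → A⊗A be the restriction to S₃-invariants of μ₁₂ (multiplication of the first two tensor factors), and let D : A⊗A → K/K² be the ℂ-linear map sending a⊗b to the class of 2(a⊗b) − (b⊗a) − (ab⊗1) (which lies in K and, under K/K² ≅ Ω¹_{A/ℂ}, equals 2a·db − b·da). Then the sequence 0 → J₃ ∩ B^{S₃} → B^{S₃} →^r A⊗A →^D K/K² → 0 is exact; i.e. ker r = J₃ ∩ B^{S₃}, the image of r equals ker D, and D is surjective. -/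
open scoped TensorProduct

noncomputable section

namespace DiagIdeals

variable (A : Type) [CommRing A] [Algebra ℂ A]

/-- `B = A ⊗ A ⊗ A` (the triple tensor product over ℂ, parenthesized to the left). -/
abbrev B3 := (A ⊗[ℂ] A) ⊗[ℂ] A

/-- The multiplication map `μ : A ⊗ A → A`. -/
abbrev mu : A ⊗[ℂ] A →ₐ[ℂ] A := Algebra.TensorProduct.lmul' ℂ

/-- `μ₁₂ : A⊗A⊗A → A⊗A`, multiplying the first and second tensor factors. -/
def mu12 : B3 A →ₐ[ℂ] A ⊗[ℂ] A :=
  Algebra.TensorProduct.map (mu A) (AlgHom.id ℂ A)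

/-- `μ₂₃ : A⊗A⊗A → A⊗A`, multiplying the second and third tensor factors. -/
def mu23 : B3 A →ₐ[ℂ] A ⊗[ℂ] A :=
  (Algebra.TensorProduct.map (AlgHom.id ℂ A) (mu A)).comp
    (Algebra.TensorProduct.assoc ℂ ℂ ℂ A A A).toAlgHom

/-- The automorphism of `A⊗A⊗A` exchanging the first two tensor factors. -/
def s12 : B3 A ≃ₐ[ℂ] B3 A :=
  Algebra.TensorProduct.congr (Algebra.TensorProduct.comm ℂ A A) AlgEquiv.refl

/-- The automorphism of `A⊗A⊗A` exchanging the last two tensor factors. -/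
def s23 : B3 A ≃ₐ[ℂ] B3 A :=
  (Algebra.TensorProduct.assoc ℂ ℂ ℂ A A A).trans
    ((Algebra.TensorProduct.congr AlgEquiv.refl (Algebra.TensorProduct.comm ℂ A A)).trans
      (Algebra.TensorProduct.assoc ℂ ℂ ℂ A A A).symm)

/-- `μ₁₃ : A⊗A⊗A → A⊗A`, multiplying the first and third tensor factors. -/
def mu13 : B3 A →ₐ[ℂ] A ⊗[ℂ] A := (mu12 A).comp (s23 A).toAlgHom

/-- The ideal `I₁₂ = ker μ₁₂` of the (1,2)-th pairwise diagonal. -/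
def I12 : Ideal (B3 A) := RingHom.ker (mu12 A)

/-- The ideal `I₁₃ = ker μ₁₃` of the (1,3)-th pairwise diagonal. -/
def I13 : Ideal (B3 A) := RingHom.ker (mu13 A)

/-- The ideal `I₂₃ = ker μ₂₃` of the (2,3)-th pairwise diagonal. -/
def I23 : Ideal (B3 A) := RingHom.ker (mu23 A)

/-- The ideal `J₃` of the big diagonal in `A⊗A⊗A`. -/
def J3 : Ideal (B3 A) := I12 A ⊓ I13 A ⊓ I23 A

/-- The set of `S₃`-invariant elements of `B = A⊗A⊗A`, for the action of `S₃`
permuting the tensor factors (invariance under the generating transpositions). -/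
def inv3 : Set (B3 A) := {b | s12 A b = b ∧ s23 A b = b}

/-- The linear endomorphism of `A ⊗ A` sending `a⊗b` to `2(a⊗b) − (b⊗a) − (ab⊗1)`. -/
def Fmap : A ⊗[ℂ] A →ₗ[ℂ] A ⊗[ℂ] A :=
  (2 : ℂ) • LinearMap.id - (TensorProduct.comm ℂ A A).toLinearMap
    - ((TensorProduct.mk ℂ A A).flip 1 ∘ₗ LinearMap.mul' ℂ A)

lemma Fmap_mem (x : A ⊗[ℂ] A) :
    Fmap A x ∈ (KaehlerDifferential.ideal ℂ A).restrictScalars ℂ := by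
  simp only [Submodule.restrictScalars_mem, KaehlerDifferential.ideal, RingHom.mem_ker]
  induction x using TensorProduct.induction_on with
  | zero => simp
  | tmul a b =>
      simp only [Fmap, LinearMap.sub_apply, LinearMap.smul_apply, LinearMap.id_apply,
        LinearEquiv.coe_coe, TensorProduct.comm_tmul, LinearMap.coe_comp,
        Function.comp_apply, LinearMap.mul'_apply, TensorProduct.mk_apply,
        LinearMap.flip_apply, map_sub, map_smul]
      simp only [Algebra.TensorProduct.lmul'_apply_tmul, smul_eq_mul, mul_one]
      rw [two_smul]
      ring
  | add x y hx hy =>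
      simp only [map_add, hx, hy, add_zero]

/-- The ℂ-linear map `D : A ⊗ A → K/K² = Ω[A⁄ℂ]` sending `a⊗b` to the class of
`2(a⊗b) − (b⊗a) − (ab⊗1)` (which lies in `K`); under `K/K² ≅ Ω¹_{A/ℂ}` this is
`2a db − b da`. -/
def Dmap : A ⊗[ℂ] A →ₗ[ℂ] Ω[A⁄ℂ] :=
  (((KaehlerDifferential.ideal ℂ A).toCotangent).restrictScalars ℂ).comp
    ((Fmap A).codRestrict ((KaehlerDifferential.ideal ℂ A).restrictScalars ℂ) (Fmap_mem A))

variable (A : Type) [CommRing A] [Algebra ℂ A]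

lemma s12_tmul (x y z : A) : s12 A ((x ⊗ₜ y) ⊗ₜ z) = (y ⊗ₜ x) ⊗ₜ z := by simp [s12]

lemma s23_tmul (x y z : A) : s23 A ((x ⊗ₜ y) ⊗ₜ z) = (x ⊗ₜ z) ⊗ₜ y := by simp [s23]

lemma mu12_tmul (x y z : A) : mu12 A ((x ⊗ₜ y) ⊗ₜ z) = (x*y) ⊗ₜ z := by simp [mu12]

lemma mu23_tmul (x y z : A) : mu23 A ((x ⊗ₜ y) ⊗ₜ z) = x ⊗ₜ (y*z) := by simp [mu23]

lemma Dmap_eq (x : A ⊗[ℂ] A) :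
    Dmap A x = (KaehlerDifferential.D ℂ A).tensorProductTo (Fmap A x) :=
  (KaehlerDifferential.D_tensorProductTo ⟨Fmap A x, Fmap_mem A x⟩).symm

lemma Dmap_tmul (u v : A) :
    Dmap A (u ⊗ₜ v) = u • KaehlerDifferential.D ℂ A v + u • KaehlerDifferential.D ℂ A v
      - v • KaehlerDifferential.D ℂ A u := by
  rw [Dmap_eq]
  have : Fmap A (u ⊗ₜ v) = u ⊗ₜ v + u ⊗ₜ v - v ⊗ₜ u - (u*v) ⊗ₜ 1 := by
    simp [Fmap, two_smul]
  rw [this]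
  simp [Derivation.tensorProductTo_tmul]

/-- The submodule of `S₃`-invariants. -/
def Linv : Submodule ℂ (B3 A) where
  carrier := inv3 A
  add_mem' := fun h g => ⟨by rw [map_add, h.1, g.1], by rw [map_add, h.2, g.2]⟩
  zero_mem' := ⟨map_zero _, map_zero _⟩
  smul_mem' := fun c x h => ⟨by rw [map_smul, h.1], by rw [map_smul, h.2]⟩

/-- The image of the invariants under `μ₁₂`. -/
def Timg : Submodule ℂ (A ⊗[ℂ] A) := (Linv A).map (mu12 A).toLinearMap

lemma mem_Timg {x : A ⊗[ℂ] A} : x ∈ Timg A ↔ ∃ b ∈ inv3 A, mu12 A b = x := Iff.rfl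

/-- The sum of `D ∘ μ₁₂ ∘ σ` over the six permutations. -/
def Phi6 : B3 A →ₗ[ℂ] Ω[A⁄ℂ] :=
  (Dmap A ∘ₗ (mu12 A).toLinearMap) +
  (Dmap A ∘ₗ (mu12 A).toLinearMap) ∘ₗ (s12 A).toLinearMap +
  (Dmap A ∘ₗ (mu12 A).toLinearMap) ∘ₗ (s23 A).toLinearMap +
  (Dmap A ∘ₗ (mu12 A).toLinearMap) ∘ₗ ((s12 A).toLinearMap ∘ₗ (s23 A).toLinearMap) +
  (Dmap A ∘ₗ (mu12 A).toLinearMap) ∘ₗ ((s23 A).toLinearMap ∘ₗ (s12 A).toLinearMap) +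
  (Dmap A ∘ₗ (mu12 A).toLinearMap) ∘ₗ
    ((s12 A).toLinearMap ∘ₗ (s23 A).toLinearMap ∘ₗ (s12 A).toLinearMap)

lemma Phi6_eq_zero (b : B3 A) : Phi6 A b = 0 := by
  induction b using TensorProduct.induction_on with
  | zero => simp
  | add x y hx hy => rw [map_add, hx, hy, add_zero]
  | tmul xy z =>
    induction xy using TensorProduct.induction_on with
    | zero => rw [TensorProduct.zero_tmul]; simp
    | add x y hx hy => rw [TensorProduct.add_tmul, map_add, hx, hy, add_zero]
    | tmul x y =>
      simp only [Phi6, LinearMap.add_apply, LinearMap.comp_apply, AlgHom.toLinearMap_apply,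
        AlgEquiv.toLinearMap_apply, s12_tmul, s23_tmul, mu12_tmul, Dmap_tmul,
        Derivation.leibniz]
      module

lemma Dmap_mu12_inv {b : B3 A} (hb : b ∈ inv3 A) : Dmap A (mu12 A b) = 0 := by
  obtain ⟨h1, h2⟩ := hb
  have h6 := Phi6_eq_zero A b
  simp only [Phi6, LinearMap.add_apply, LinearMap.comp_apply, AlgHom.toLinearMap_apply,
    AlgEquiv.toLinearMap_apply, h1, h2] at h6
  have h7 : (6:ℂ) • Dmap A (mu12 A b) = 0 := by rw [← h6]; module
  have := congrArg (fun w => ((6:ℂ)⁻¹) • w) h7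
  simpa [smul_smul] using this

lemma third_smul (u : Ω[A⁄ℂ]) : (3⁻¹:ℂ) • (u + u + u) = u := by module

lemma Dmap_surj' : Function.Surjective (Dmap A) := by
  intro w
  have hw : w ∈ Submodule.span A (Set.range <| KaehlerDifferential.D ℂ A) := by
    rw [KaehlerDifferential.span_range_derivation]; trivial
  have key : ∀ w ∈ Submodule.span A (Set.range <| KaehlerDifferential.D ℂ A),
      ∀ a : A, ∃ x, Dmap A x = a • w := by
    intro w hw
    refine Submodule.span_induction ?_ ?_ ?_ ?_ hw
    · rintro _ ⟨v, rfl⟩ a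
      refine ⟨(3⁻¹:ℂ) • (a ⊗ₜ v + a ⊗ₜ v + v ⊗ₜ a), ?_⟩
      rw [map_smul]
      have key2 : Dmap A (a ⊗ₜ v + a ⊗ₜ v + v ⊗ₜ a)
          = a • KaehlerDifferential.D ℂ A v + a • KaehlerDifferential.D ℂ A v
            + a • KaehlerDifferential.D ℂ A v := by
        simp only [map_add, Dmap_tmul]
        abel
      rw [key2, third_smul]
    · intro a; exact ⟨0, by simp⟩
    · rintro x y - - hx hy a
      obtain ⟨u, hu⟩ := hx a; obtain ⟨v, hv⟩ := hy a
      exact ⟨u + v, by rw [map_add, hu, hv, smul_add]⟩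
    · rintro c x - hx a
      obtain ⟨u, hu⟩ := hx (a * c)
      exact ⟨u, by rw [hu, mul_smul]⟩
  obtain ⟨x, hx⟩ := key w hw 1
  exact ⟨x, by rw [hx, one_smul]⟩

lemma half_smul (u : A ⊗[ℂ] A) : (2⁻¹:ℂ) • (u + u) = u := by module

lemma sym_mem (x y z : A) :
    (x*y) ⊗ₜ[ℂ] z + (x*z) ⊗ₜ[ℂ] y + (y*z) ⊗ₜ[ℂ] x ∈ Timg A := by
  refine ⟨(2⁻¹:ℂ) • (((x ⊗ₜ y) ⊗ₜ z) + ((y ⊗ₜ x) ⊗ₜ z) + ((x ⊗ₜ z) ⊗ₜ y)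
    + ((z ⊗ₜ x) ⊗ₜ y) + ((y ⊗ₜ z) ⊗ₜ x) + ((z ⊗ₜ y) ⊗ₜ x)), ?_, ?_⟩
  · refine Submodule.smul_mem (Linv A) _ ?_
    constructor
    · simp only [map_add, s12_tmul]; abel
    · simp only [map_add, s23_tmul]; abel
  · show (mu12 A).toLinearMap _ = _
    rw [AlgHom.toLinearMap_apply, map_smul]
    have key : mu12 A (((x ⊗ₜ y) ⊗ₜ z) + ((y ⊗ₜ x) ⊗ₜ z) + ((x ⊗ₜ z) ⊗ₜ y)
        + ((z ⊗ₜ x) ⊗ₜ y) + ((y ⊗ₜ z) ⊗ₜ x) + ((z ⊗ₜ y) ⊗ₜ x))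
        = ((x*y) ⊗ₜ[ℂ] z + (x*z) ⊗ₜ[ℂ] y + (y*z) ⊗ₜ[ℂ] x)
          + ((x*y) ⊗ₜ[ℂ] z + (x*z) ⊗ₜ[ℂ] y + (y*z) ⊗ₜ[ℂ] x) := by
      simp only [map_add, mu12_tmul, mul_comm y x, mul_comm z x, mul_comm z y]
      abel
    rw [key, half_smul]

lemma mul'_eq_mu (z : A ⊗[ℂ] A) : (LinearMap.mul' ℂ A) z = mu A z := by
  induction z using TensorProduct.induction_on with
  | zero => simp
  | tmul => simp [Algebra.TensorProduct.lmul'_apply_tmul]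
  | add u v hu hv => simp only [map_add, hu, hv]

lemma Fmap_apply (y : A ⊗[ℂ] A) :
    Fmap A y = y + y - (TensorProduct.comm ℂ A A) y
      - ((TensorProduct.mk ℂ A A).flip 1) (mu A y) := by
  simp only [Fmap, LinearMap.sub_apply, LinearMap.smul_apply, LinearMap.id_apply,
    LinearEquiv.coe_coe, LinearMap.coe_comp, Function.comp_apply, two_smul, mul'_eq_mu,
    LinearMap.add_apply]

lemma tPT_comm (z : A ⊗[ℂ] A) :
    (KaehlerDifferential.D ℂ A).tensorProductTo ((TensorProduct.comm ℂ A A) z)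
      + (KaehlerDifferential.D ℂ A).tensorProductTo z
      = KaehlerDifferential.D ℂ A (mu A z) := by
  induction z using TensorProduct.induction_on with
  | zero => simp
  | tmul a b =>
    simp only [TensorProduct.comm_tmul, Derivation.tensorProductTo_tmul,
      Algebra.TensorProduct.lmul'_apply_tmul, Derivation.leibniz]
    abel
  | add u v hu hv =>
    simp only [map_add]
    rw [← hu, ← hv]; abel

lemma Dmap_of_ker {y : A ⊗[ℂ] A} (hy : y ∈ KaehlerDifferential.ideal ℂ A) :
    Dmap A y = (3:ℂ) • (KaehlerDifferential.ideal ℂ A).toCotangent ⟨y, hy⟩ := by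
  have hmu : mu A y = 0 := hy
  rw [Dmap_eq, Fmap_apply, hmu]
  have hc := tPT_comm A y
  rw [hmu, map_zero] at hc
  simp only [map_zero, map_sub, map_add, sub_zero]
  rw [← KaehlerDifferential.D_tensorProductTo ⟨y, hy⟩]
  set t := (KaehlerDifferential.D ℂ A).tensorProductTo y with ht
  set s := (KaehlerDifferential.D ℂ A).tensorProductTo ((TensorProduct.comm ℂ A A) y) with hs
  have hst : s = -t := by rw [eq_neg_iff_add_eq_zero, hc]
  rw [hst]
  show t + t - -t = (3:ℂ) • t
  module
lemma key_mem (p q a b : A) :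
    ((p ⊗ₜ[ℂ] q) * ((1 ⊗ₜ a - a ⊗ₜ 1) * (1 ⊗ₜ b - b ⊗ₜ 1)) : A ⊗[ℂ] A) ∈ Timg A := by
  have h1 := sym_mem A 1 p (q*(a*b))
  have h2 := sym_mem A 1 (p*b) (q*a)
  have h3 := sym_mem A p a (q*b)
  have h4 := sym_mem A q a (p*b)
  have key : ((p ⊗ₜ[ℂ] q) * ((1 ⊗ₜ a - a ⊗ₜ 1) * (1 ⊗ₜ b - b ⊗ₜ 1)) : A ⊗[ℂ] A)
      = ((1*p) ⊗ₜ[ℂ] (q*(a*b)) + (1*(q*(a*b))) ⊗ₜ[ℂ] p + (p*(q*(a*b))) ⊗ₜ[ℂ] 1)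
        - ((1*(p*b)) ⊗ₜ[ℂ] (q*a) + (1*(q*a)) ⊗ₜ[ℂ] (p*b) + ((p*b)*(q*a)) ⊗ₜ[ℂ] 1)
        - ((p*a) ⊗ₜ[ℂ] (q*b) + (p*(q*b)) ⊗ₜ[ℂ] a + (a*(q*b)) ⊗ₜ[ℂ] p)
        + ((q*a) ⊗ₜ[ℂ] (p*b) + (q*(p*b)) ⊗ₜ[ℂ] a + (a*(p*b)) ⊗ₜ[ℂ] q) := by
    simp only [mul_sub, sub_mul, Algebra.TensorProduct.tmul_mul_tmul, one_mul, mul_one]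
    ring_nf
  rw [key]
  exact add_mem (sub_mem (sub_mem h1 h2) h3) h4

lemma sq_le_Timg {y : A ⊗[ℂ] A} (hy : y ∈ (KaehlerDifferential.ideal ℂ A) ^ 2) :
    y ∈ Timg A := by
  have hspan : Ideal.span (Set.range fun s : A => (1:A) ⊗ₜ[ℂ] s - s ⊗ₜ[ℂ] (1:A))
      = KaehlerDifferential.ideal ℂ A := KaehlerDifferential.span_range_eq_ideal ℂ A
  have step1 : ∀ r : A ⊗[ℂ] A, ∀ a b : A,
      r * (((1:A) ⊗ₜ a - a ⊗ₜ 1) * ((1:A) ⊗ₜ b - b ⊗ₜ 1)) ∈ Timg A := by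
    intro r a b
    induction r using TensorProduct.induction_on with
    | zero => rw [zero_mul]; exact zero_mem _
    | tmul p q => exact key_mem A p q a b
    | add u v hu hv => rw [add_mul]; exact add_mem hu hv
  have step2 : ∀ a : A, ∀ y ∈ KaehlerDifferential.ideal ℂ A, ∀ r : A ⊗[ℂ] A,
      r * (((1:A) ⊗ₜ a - a ⊗ₜ 1) * y) ∈ Timg A := by
    intro a y hy
    rw [← hspan] at hy
    refine Submodule.span_induction ?_ ?_ ?_ ?_ hy
    · rintro _ ⟨b, rfl⟩ r; exact step1 r a b
    · intro r; rw [mul_zero, mul_zero]; exact zero_mem _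
    · intro u v _ _ hu hv r
      rw [mul_add, mul_add]; exact add_mem (hu r) (hv r)
    · intro c u _ hu r
      have : r * (((1:A) ⊗ₜ a - a ⊗ₜ 1) * (c • u))
          = (r * c) * (((1:A) ⊗ₜ a - a ⊗ₜ 1) * u) := by
        rw [smul_eq_mul]; ring
      rw [this]; exact hu (r * c)
  have step3 : ∀ x ∈ KaehlerDifferential.ideal ℂ A, ∀ y ∈ KaehlerDifferential.ideal ℂ A,
      ∀ r : A ⊗[ℂ] A, r * (x * y) ∈ Timg A := by
    intro x hx
    rw [← hspan] at hx
    refine Submodule.span_induction ?_ ?_ ?_ ?_ hx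
    · rintro _ ⟨a, rfl⟩ y hy r; exact step2 a y hy r
    · intro y _ r; rw [zero_mul, mul_zero]; exact zero_mem _
    · intro u v _ _ hu hv y hy r
      rw [add_mul, mul_add]; exact add_mem (hu y hy r) (hv y hy r)
    · intro c u _ hu y hy r
      have : r * ((c • u) * y) = (r * c) * (u * y) := by rw [smul_eq_mul]; ring
      rw [this]; exact hu y hy (r * c)
  rw [pow_two] at hy
  refine Submodule.mul_induction_on hy ?_ ?_
  · intro x hx z hz
    have := step3 x hx z hz 1
    rwa [one_mul] at this
  · intro u v hu hv; exact add_mem hu hv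

lemma mu13_apply (b : B3 A) : mu13 A b = mu12 A (s23 A b) := rfl

lemma mu23_apply (b : B3 A) :
    mu23 A b = (Algebra.TensorProduct.comm ℂ A A) (mu12 A (s23 A (s12 A b))) := by
  induction b using TensorProduct.induction_on with
  | zero => simp
  | add u v hu hv => simp only [map_add, hu, hv]
  | tmul xy z =>
    induction xy using TensorProduct.induction_on with
    | zero => rw [TensorProduct.zero_tmul]; simp
    | add u v hu hv =>
      rw [TensorProduct.add_tmul]
      simp only [map_add, hu, hv]
    | tmul x y =>
      rw [mu23_tmul, s12_tmul, s23_tmul, mu12_tmul, Algebra.TensorProduct.comm_tmul]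
/-- Let `A` be a smooth ℂ-algebra, `B = A⊗A⊗A` with `S₃` permuting
the tensor factors, and `J₃ = I₁₂ ∩ I₁₃ ∩ I₂₃`. Let `r : B^{S₃} → A⊗A` be the
restriction of `μ₁₂` to the `S₃`-invariants, and `D : A⊗A → K/K²` the ℂ-linear map
`a⊗b ↦ [2(a⊗b) − (b⊗a) − (ab⊗1)]` (i.e. `2a·db − b·da`). Then the sequence
`0 → J₃ ∩ B^{S₃} → B^{S₃} →ʳ A⊗A →ᴰ K/K² → 0` is exact: `ker r = J₃ ∩ B^{S₃}`,
`im r = ker D`, and `D` is surjective. -/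
theorem stmt11 (A : Type) [CommRing A] [Algebra ℂ A]
    [Algebra.FormallySmooth ℂ A] [Algebra.FinitePresentation ℂ A] :
    (∀ b ∈ inv3 A, (mu12 A b = 0 ↔ b ∈ J3 A)) ∧
    {x : A ⊗[ℂ] A | ∃ b ∈ inv3 A, mu12 A b = x} = {x : A ⊗[ℂ] A | Dmap A x = 0} ∧
    Function.Surjective (Dmap A) := by
  refine ⟨?_, ?_, Dmap_surj' A⟩
  · intro b hb
    constructor
    · intro h0
      have h13 : mu13 A b = 0 := by rw [mu13_apply, hb.2, h0]
      have h23 : mu23 A b = 0 := by rw [mu23_apply, hb.1, hb.2, h0, map_zero]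
      simp only [J3, I12, I13, I23, Submodule.mem_inf, RingHom.mem_ker]
      exact ⟨⟨h0, h13⟩, h23⟩
    · intro hJ
      have : b ∈ I12 A := hJ.1.1
      exact this
  · ext x
    simp only [Set.mem_setOf_eq]
    constructor
    · rintro ⟨b, hb, rfl⟩; exact Dmap_mu12_inv A hb
    · intro hx
      set m := mu A x with hm
      have hx0 : (m*1) ⊗ₜ[ℂ] (1:A) + (m*1) ⊗ₜ[ℂ] (1:A) + ((1:A)*1) ⊗ₜ[ℂ] m ∈ Timg A :=
        sym_mem A m 1 1
      rw [mul_one, one_mul] at hx0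
      set x₀ : A ⊗[ℂ] A := (3⁻¹:ℂ) • (m ⊗ₜ 1 + m ⊗ₜ 1 + (1:A) ⊗ₜ m) with hx₀def
      have hx0' : x₀ ∈ Timg A := Submodule.smul_mem _ _ hx0
      have hker : x - x₀ ∈ KaehlerDifferential.ideal ℂ A := by
        show mu A (x - x₀) = 0
        rw [map_sub, hx₀def, map_smul]
        simp only [map_add, Algebra.TensorProduct.lmul'_apply_tmul, mul_one, one_mul]
        rw [← hm]
        have : (3⁻¹:ℂ) • (m + m + m) = m := by module
        rw [this, sub_self]
      have hD0 : Dmap A x₀ = 0 := by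
        obtain ⟨b, hbinv, hbeq⟩ := hx0'
        rw [← hbeq]; exact Dmap_mu12_inv A hbinv
      have hDy : Dmap A (x - x₀) = 0 := by rw [map_sub, hx, hD0, sub_zero]
      have h3 : (3:ℂ) • (KaehlerDifferential.ideal ℂ A).toCotangent ⟨x - x₀, hker⟩ = 0 := by
        rw [← Dmap_of_ker A hker, hDy]; rfl
      have hcot : (KaehlerDifferential.ideal ℂ A).toCotangent ⟨x - x₀, hker⟩ = 0 := by
        have := congrArg (fun w => (3⁻¹:ℂ) • w) h3
        simpa [smul_smul] using this
      have hsq : x - x₀ ∈ (KaehlerDifferential.ideal ℂ A) ^ 2 :=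
        (Ideal.toCotangent_eq_zero _ _).mp hcot
      have hmem : x ∈ Timg A := by
        have := add_mem (sq_le_Timg A hsq) hx0'
        rwa [sub_add_cancel] at this
      exact hmem

end DiagIdeals

end
end

section
/- In B = ℂ[x₁,x₂,x₃,y₁,y₂,y₃], let I_{ij} = (xᵢ−xⱼ, yᵢ−yⱼ) for 1 ≤ i < j ≤ 3 and let q = (x₂−x₁)(y₃−y₁) − (y₂−y₁)(x₃−x₁). Then the ideal of the big diagonal equals the product ideal together with q: I₁₂ ∩ I₁₃ ∩ I₂₃ = I₁₂·I₁₃·I₂₃ + (q). -/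
/-!
Statement 15: In `B = ℂ[x₁,x₂,x₃,y₁,y₂,y₃]` (realized as
`MvPolynomial (Fin 3 × Fin 2) ℂ`, with `X (i,0) = x_{i+1}` and `X (i,1) = y_{i+1}`),
with `I_{ij} = (xᵢ − xⱼ, yᵢ − yⱼ)` and
`q = (x₂−x₁)(y₃−y₁) − (y₂−y₁)(x₃−x₁)`, the ideal of the big diagonal equals the
product ideal together with `q`:
`I₁₂ ∩ I₁₃ ∩ I₂₃ = I₁₂·I₁₃·I₂₃ + (q)`.
-/

noncomputable section

open MvPolynomial

/-- The polynomial ring `B = ℂ[x₁,x₂,x₃,y₁,y₂,y₃]`. -/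
abbrev Bpoly := MvPolynomial (Fin 3 × Fin 2) ℂ

/-- The ideal `I_{ij} = (xᵢ − xⱼ, yᵢ − yⱼ)` (indices `0`-based). -/
def pairIdeal (i j : Fin 3) : Ideal Bpoly :=
  Ideal.span {X (i, 0) - X (j, 0), X (i, 1) - X (j, 1)}

/-- The quadric `q = (x₂−x₁)(y₃−y₁) − (y₂−y₁)(x₃−x₁)` (indices `0`-based). -/
def qQuadric : Bpoly :=
  (X (1, 0) - X (0, 0)) * (X (2, 1) - X (0, 1))
    - (X (1, 1) - X (0, 1)) * (X (2, 0) - X (0, 0))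

/-! ### Auxiliary machinery -/

section Aux

open Classical in
/-- The substitution killing the variables in `S`. -/
def killS {σ : Type*} (S : Set σ) : MvPolynomial σ ℂ →ₐ[ℂ] MvPolynomial σ ℂ :=
  aeval fun p => if p ∈ S then 0 else X p

variable {σ : Type*}

lemma killS_X_mem {S : Set σ} {i : σ} (h : i ∈ S) :
    killS S (X i) = 0 := by simp [killS, h]

lemma killS_X_notMem {S : Set σ} {i : σ} (h : i ∉ S) :
    killS S (X i) = X i := by simp [killS, h]

lemma sub_killS_mem (S : Set σ) (f : MvPolynomial σ ℂ) :
    f - killS S f ∈ Ideal.span (X '' S : Set (MvPolynomial σ ℂ)) := by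
  induction f using MvPolynomial.induction_on with
  | C a => simp [killS]
  | add p q hp hq =>
    have : p + q - killS S (p + q) = (p - killS S p) + (q - killS S q) := by
      rw [map_add]; ring
    rw [this]; exact Ideal.add_mem _ hp hq
  | mul_X p i hp =>
    rw [map_mul]
    by_cases hi : i ∈ S
    · rw [killS_X_mem hi, mul_zero, sub_zero]
      exact Ideal.mul_mem_left _ _ (Ideal.subset_span ⟨i, hi, rfl⟩)
    · rw [killS_X_notMem hi]
      have : p * X i - killS S p * X i = (p - killS S p) * X i := by ring
      rw [this]
      exact Ideal.mul_mem_right _ _ hp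

lemma mem_span_iff_killS (S : Set σ) (f : MvPolynomial σ ℂ) :
    f ∈ Ideal.span (X '' S : Set (MvPolynomial σ ℂ)) ↔ killS S f = 0 := by
  constructor
  · intro hf
    have h2 : killS S f ∈ Ideal.map (killS S) (Ideal.span (X '' S : Set (MvPolynomial σ ℂ))) :=
      Ideal.mem_map_of_mem _ hf
    rw [Ideal.map_span] at h2
    have h3 : (killS S : MvPolynomial σ ℂ → MvPolynomial σ ℂ) '' (X '' S) ⊆ {0} := by
      rintro - ⟨-, ⟨i, hi, rfl⟩, rfl⟩
      simp [killS_X_mem hi]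
    have h4 := Ideal.span_mono h3 h2
    rwa [Ideal.span_singleton_eq_bot.mpr rfl, Ideal.mem_bot] at h4
  · intro hf
    have := sub_killS_mem S f
    rwa [hf, sub_zero] at this

lemma killS_idem (S : Set σ) (f : MvPolynomial σ ℂ) :
    killS S (killS S f) = killS S f := by
  have : (killS S).comp (killS S) = killS S := by
    apply MvPolynomial.algHom_ext
    intro i
    by_cases hi : i ∈ S
    · simp [killS_X_mem hi]
    · simp [killS_X_notMem hi]
  exact DFunLike.congr_fun this f

lemma X_dvd_iff_killS [DecidableEq σ] (j : σ) (f : MvPolynomial σ ℂ) :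
    X j ∣ f ↔ killS {j} f = 0 := by
  rw [← Ideal.mem_span_singleton, ← Set.image_singleton, mem_span_iff_killS]

/-- The syzygy lemma for `u², uv, v²`. -/
lemma syzygy [DecidableEq σ] (i j : σ) (hij : i ≠ j) (P C S : MvPolynomial σ ℂ)
    (h : P * (X i * X i) + C * (X i * X j) + S * (X j * X j) = 0) :
    ∃ α β, P = α * X j ∧ C = β * X j - α * X i ∧ S = -(β * X i) := by
  set ev := killS ({j} : Set σ) with hev
  have hXi : ev (X i) = X i := killS_X_notMem (by simpa using hij)
  have hXj : ev (X j) = 0 := killS_X_mem rfl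
  have hXine : (X i : MvPolynomial σ ℂ) ≠ 0 := X_ne_zero i
  have hXjne : (X j : MvPolynomial σ ℂ) ≠ 0 := X_ne_zero j
  have h1 : ev P * (X i * X i) = 0 := by
    have := congrArg ev h
    simpa [map_add, map_mul, hXi, hXj] using this
  have hP0 : ev P = 0 := by
    rcases mul_eq_zero.mp h1 with h' | h'
    · exact h'
    · exact absurd h' (mul_ne_zero hXine hXine)
  obtain ⟨α, hα⟩ : X j ∣ P := (X_dvd_iff_killS j P).mpr hP0
  have hP : P = α * X j := by rw [hα]; ring
  have h2 : X j * (α * (X i * X i) + C * X i + S * X j) = 0 := by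
    rw [hP] at h; linear_combination h
  have h3 : α * (X i * X i) + C * X i + S * X j = 0 :=
    (mul_eq_zero.mp h2).resolve_left hXjne
  have h4 : (ev C + ev α * X i) * X i = 0 := by
    have := congrArg ev h3
    simp only [map_add, map_mul, hXi, hXj, mul_zero, add_zero, map_zero] at this
    linear_combination this
  have hC0 : ev (C + α * X i) = 0 := by
    rw [map_add, map_mul, hXi]
    exact (mul_eq_zero.mp h4).resolve_right hXine
  obtain ⟨β, hβ⟩ : X j ∣ (C + α * X i) := (X_dvd_iff_killS j _).mpr hC0
  have hC : C = β * X j - α * X i := by linear_combination hβ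
  have h5 : X j * (β * X i + S) = 0 := by rw [hC] at h3; linear_combination h3
  have hS : S = -(β * X i) := by
    have := (mul_eq_zero.mp h5).resolve_left hXjne
    linear_combination this
  exact ⟨α, β, hP, hC, hS⟩

lemma monomial_factor [DecidableEq σ] (a b : σ) (hab : a ≠ b) (m : σ →₀ ℕ) (c : ℂ)
    (ha : m a ≠ 0) (hb : m b ≠ 0) :
    (monomial m c : MvPolynomial σ ℂ) =
      X a * X b * monomial (m - Finsupp.single a 1 - Finsupp.single b 1) c := by
  rw [X, X, monomial_mul, monomial_mul, one_mul, one_mul]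
  have hm : (Finsupp.single a 1 + Finsupp.single b 1) +
      (m - Finsupp.single a 1 - Finsupp.single b 1) = m := by
    ext k
    have ha' : 1 ≤ m a := Nat.one_le_iff_ne_zero.mpr ha
    have hb' : 1 ≤ m b := Nat.one_le_iff_ne_zero.mpr hb
    simp only [Finsupp.coe_add, Pi.add_apply, Finsupp.tsub_apply, Finsupp.single_apply]
    rcases eq_or_ne a k with rfl | h1
    · rw [if_pos rfl, if_neg (Ne.symm hab)]
      omega
    · rcases eq_or_ne b k with rfl | h2
      · rw [if_neg h1, if_pos rfl]
        omega
      · rw [if_neg h1, if_neg h2]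
        omega
  rw [hm]

/-- Intersection of two monomial "variable" ideals in disjoint variables. -/
lemma inter_of_disjoint_vars [DecidableEq σ] (i1 i2 j1 j2 : σ)
    (hd : ∀ a ∈ ({i1, i2} : Set σ), ∀ b ∈ ({j1, j2} : Set σ), a ≠ b) :
    Ideal.span {(X i1 : MvPolynomial σ ℂ), X i2} ⊓ Ideal.span {X j1, X j2} =
      Ideal.span {(X i1 : MvPolynomial σ ℂ) * X j1, X i1 * X j2, X i2 * X j1, X i2 * X j2} := by
  apply le_antisymm
  · intro f hf
    obtain ⟨h1, h2⟩ := Ideal.mem_inf.mp hf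
    rw [show ({(X i1 : MvPolynomial σ ℂ), X i2} : Set _) = X '' {i1, i2} by
      rw [Set.image_insert_eq, Set.image_singleton]] at h1
    rw [show ({(X j1 : MvPolynomial σ ℂ), X j2} : Set _) = X '' {j1, j2} by
      rw [Set.image_insert_eq, Set.image_singleton]] at h2
    rw [mem_ideal_span_X_image] at h1 h2
    rw [f.as_sum]
    refine Ideal.sum_mem _ fun m hm => ?_
    obtain ⟨a, haS, ha⟩ := h1 m hm
    obtain ⟨b, hbS, hb⟩ := h2 m hm
    rw [monomial_factor a b (hd a haS b hbS) m _ ha hb]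
    refine Ideal.mul_mem_right _ _ (Ideal.subset_span ?_)
    rcases haS with rfl | haS <;> rcases hbS with rfl | hbS <;>
      simp_all [Set.mem_insert_iff]
  · rw [Ideal.span_le]
    rintro g (rfl | rfl | rfl | rfl) <;>
      exact ⟨Ideal.mul_mem_right _ _ (Ideal.subset_span (by simp)),
             Ideal.mul_mem_left _ _ (Ideal.subset_span (by simp))⟩

/-- `Ideal.map` along a bijective algebra endomorphism commutes with `⊓`. -/
lemma map_inf_of_bij {F R : Type*} [CommRing R] [FunLike F R R] [RingHomClass F R R]
    (g : F) (hg : Function.Bijective g)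
    (I J : Ideal R) : Ideal.map g (I ⊓ J) = Ideal.map g I ⊓ Ideal.map g J := by
  apply le_antisymm
  · exact le_inf (Ideal.map_mono inf_le_left) (Ideal.map_mono inf_le_right)
  · intro x hx
    obtain ⟨hx1, hx2⟩ := Ideal.mem_inf.mp hx
    obtain ⟨y, hy, rfl⟩ := (Ideal.mem_map_iff_of_surjective g hg.2).mp hx1
    obtain ⟨z, hz, hzy⟩ := (Ideal.mem_map_iff_of_surjective g hg.2).mp hx2
    have : z = y := hg.1 hzy
    subst this
    exact Ideal.mem_map_of_mem _ (Ideal.mem_inf.mpr ⟨hy, hz⟩)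

lemma map_span_pair {F R : Type*} [CommRing R] [FunLike F R R] [RingHomClass F R R]
    (g : F) (x y : R) :
    Ideal.map g (Ideal.span {x, y}) = Ideal.span {g x, g y} := by
  rw [Ideal.map_span, Set.image_insert_eq, Set.image_singleton]

lemma map_span_single {F R : Type*} [CommRing R] [FunLike F R R] [RingHomClass F R R]
    (g : F) (x : R) :
    Ideal.map g (Ideal.span {x}) = Ideal.span {g x} := by
  rw [Ideal.map_span, Set.image_singleton]

lemma mem_span_quad_repr {R : Type*} [CommRing R] {g1 g2 g3 g4 x : R}
    (h : x ∈ Ideal.span {g1, g2, g3, g4}) :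
    ∃ P Q R' S, x = P * g1 + Q * g2 + R' * g3 + S * g4 := by
  rw [Ideal.mem_span_insert] at h; obtain ⟨P, z, hz, rfl⟩ := h
  rw [Ideal.mem_span_insert] at hz; obtain ⟨Q, z2, hz2, rfl⟩ := hz
  rw [Ideal.mem_span_insert] at hz2; obtain ⟨R', z3, hz3, rfl⟩ := hz2
  rw [Ideal.mem_span_singleton] at hz3; obtain ⟨S, rfl⟩ := hz3
  exact ⟨P, Q, R', S, by ring⟩

lemma map_span_quad {F R : Type*} [CommRing R] [FunLike F R R] [RingHomClass F R R]
    (g : F) (x y z w : R) :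
    Ideal.map g (Ideal.span {x, y, z, w}) = Ideal.span {g x, g y, g z, g w} := by
  rw [Ideal.map_span, Set.image_insert_eq, Set.image_insert_eq, Set.image_insert_eq,
    Set.image_singleton]

end Aux

/-! ### The two changes of coordinates -/

/-- The self-inverse substitution `x₁ ↦ x₁`, `x₂ ↦ x₁ − x₂`, `x₃ ↦ x₁ − x₂ − x₃` (same on `y`). -/
def Tsub : Bpoly →ₐ[ℂ] Bpoly :=
  aeval fun p =>
    if p.1 = 0 then X p
    else if p.1 = 1 then X (0, p.2) - X (1, p.2)
    else X (0, p.2) - X (1, p.2) - X (2, p.2)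

/-- The inverse substitution `x₁ ↦ x₁`, `x₂ ↦ x₁ − x₂`, `x₃ ↦ x₂ − x₃`. -/
def Tsub' : Bpoly →ₐ[ℂ] Bpoly :=
  aeval fun p =>
    if p.1 = 0 then X p
    else if p.1 = 1 then X (0, p.2) - X (1, p.2)
    else X (1, p.2) - X (2, p.2)

lemma Tsub_inv1 : Tsub.comp Tsub' = AlgHom.id ℂ Bpoly := by
  apply MvPolynomial.algHom_ext
  rintro ⟨i, k⟩
  fin_cases i <;> simp [Tsub, Tsub'] <;> ring

lemma Tsub_inv2 : Tsub'.comp Tsub = AlgHom.id ℂ Bpoly := by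
  apply MvPolynomial.algHom_ext
  rintro ⟨i, k⟩
  fin_cases i <;> simp [Tsub, Tsub'] <;> ring

lemma Tsub_bij : Function.Bijective Tsub :=
  Function.bijective_iff_has_inverse.mpr
    ⟨Tsub', fun x => DFunLike.congr_fun Tsub_inv2 x, fun x => DFunLike.congr_fun Tsub_inv1 x⟩

/-- The substitution fixing rows 0 and 1 and sending `x₃ ↦ x₂ + x₃`. -/
def Ssub : Bpoly →ₐ[ℂ] Bpoly :=
  aeval fun p => if p.1 = 2 then X (1, p.2) + X p else X p

/-- Its inverse, `x₃ ↦ x₃ − x₂`. -/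
def Ssub' : Bpoly →ₐ[ℂ] Bpoly :=
  aeval fun p => if p.1 = 2 then X p - X (1, p.2) else X p

lemma Ssub_inv1 : Ssub.comp Ssub' = AlgHom.id ℂ Bpoly := by
  apply MvPolynomial.algHom_ext
  rintro ⟨i, k⟩
  fin_cases i <;> simp [Ssub, Ssub'] <;> ring

lemma Ssub_inv2 : Ssub'.comp Ssub = AlgHom.id ℂ Bpoly := by
  apply MvPolynomial.algHom_ext
  rintro ⟨i, k⟩
  fin_cases i <;> simp [Ssub, Ssub'] <;> ring

lemma Ssub_bij : Function.Bijective Ssub :=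
  Function.bijective_iff_has_inverse.mpr
    ⟨Ssub', fun x => DFunLike.congr_fun Ssub_inv2 x, fun x => DFunLike.congr_fun Ssub_inv1 x⟩

/-! ### Images of the generators -/

lemma Tsub_gen01 (k : Fin 2) : Tsub (X (0, k) - X (1, k)) = X (1, k) := by
  simp [Tsub]

lemma Tsub_gen02 (k : Fin 2) : Tsub (X (0, k) - X (2, k)) = X (1, k) + X (2, k) := by
  simp [Tsub]; ring

lemma Tsub_gen12 (k : Fin 2) : Tsub (X (1, k) - X (2, k)) = X (2, k) := by
  simp [Tsub]

lemma Tsub_q : Tsub qQuadric = X (1, 0) * X (2, 1) - X (1, 1) * X (2, 0) := by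
  simp [Tsub, qQuadric]; ring

lemma Ssub_X1 (k : Fin 2) : Ssub (X (1, k)) = X (1, k) := by simp [Ssub]

lemma Ssub_X2 (k : Fin 2) : Ssub (X (2, k)) = X (1, k) + X (2, k) := by simp [Ssub]

/-! ### The intersection lemma in the final coordinates -/

lemma lemmaA :
    Ideal.span {(X (1, 0) : Bpoly), X (1, 1)} ⊓
        Ideal.span {X (1, 0) + X (2, 0), X (1, 1) + X (2, 1)} =
      Ideal.span {(X (1, 0) : Bpoly) * (X (1, 0) + X (2, 0)), X (1, 0) * (X (1, 1) + X (2, 1)),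
        X (1, 1) * (X (1, 0) + X (2, 0)), X (1, 1) * (X (1, 1) + X (2, 1))} := by
  have hd : ∀ a ∈ ({(1, 0), (1, 1)} : Set (Fin 3 × Fin 2)),
      ∀ b ∈ ({(2, 0), (2, 1)} : Set (Fin 3 × Fin 2)), a ≠ b := by
    intro a ha b hb
    simp only [Set.mem_insert_iff, Set.mem_singleton_iff] at ha hb
    rcases ha with rfl | rfl <;> rcases hb with rfl | rfl <;> decide
  have base := inter_of_disjoint_vars (σ := Fin 3 × Fin 2)
    ((1 : Fin 3), (0 : Fin 2)) (1, 1) (2, 0) (2, 1) hd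
  have h1 : Ideal.map Ssub (Ideal.span {(X (1, 0) : Bpoly), X (1, 1)}) =
      Ideal.span {(X (1, 0) : Bpoly), X (1, 1)} := by
    rw [map_span_pair, Ssub_X1, Ssub_X1]
  have h2 : Ideal.map Ssub (Ideal.span {(X (2, 0) : Bpoly), X (2, 1)}) =
      Ideal.span {X (1, 0) + X (2, 0), X (1, 1) + X (2, 1)} := by
    rw [map_span_pair, Ssub_X2, Ssub_X2]
  calc Ideal.span {(X (1, 0) : Bpoly), X (1, 1)} ⊓
        Ideal.span {X (1, 0) + X (2, 0), X (1, 1) + X (2, 1)}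
      = Ideal.map Ssub (Ideal.span {(X (1, 0) : Bpoly), X (1, 1)} ⊓
          Ideal.span {(X (2, 0) : Bpoly), X (2, 1)}) := by
        rw [map_inf_of_bij Ssub Ssub_bij, h1, h2]
    _ = _ := by
        rw [base, map_span_quad]
        rw [show Ssub ((X (1, 0) : Bpoly) * X (2, 0)) = X (1, 0) * (X (1, 0) + X (2, 0)) by
            rw [map_mul, Ssub_X1, Ssub_X2],
          show Ssub ((X (1, 0) : Bpoly) * X (2, 1)) = X (1, 0) * (X (1, 1) + X (2, 1)) by
            rw [map_mul, Ssub_X1, Ssub_X2],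
          show Ssub ((X (1, 1) : Bpoly) * X (2, 0)) = X (1, 1) * (X (1, 0) + X (2, 0)) by
            rw [map_mul, Ssub_X1, Ssub_X2],
          show Ssub ((X (1, 1) : Bpoly) * X (2, 1)) = X (1, 1) * (X (1, 1) + X (2, 1)) by
            rw [map_mul, Ssub_X1, Ssub_X2]]

/-- The set of "row 2" variables. -/
def Svars : Set (Fin 3 × Fin 2) := {(2, 0), (2, 1)}

lemma span_row2 :
    Ideal.span {(X (2, 0) : Bpoly), X (2, 1)} = Ideal.span (X '' Svars) := by
  rw [show (X '' Svars : Set Bpoly) = {X (2, 0), X (2, 1)} by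
    rw [Svars, Set.image_insert_eq, Set.image_singleton]]

/-! ### The main identity in the final coordinates -/

lemma key :
    Ideal.span {(X (1, 0) : Bpoly), X (1, 1)} ⊓
        Ideal.span {X (1, 0) + X (2, 0), X (1, 1) + X (2, 1)} ⊓
        Ideal.span {X (2, 0), X (2, 1)} =
      Ideal.span {(X (1, 0) : Bpoly), X (1, 1)} *
          Ideal.span {X (1, 0) + X (2, 0), X (1, 1) + X (2, 1)} *
          Ideal.span {X (2, 0), X (2, 1)} +
        Ideal.span {X (1, 0) * X (2, 1) - X (1, 1) * X (2, 0)} := by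
  set u : Bpoly := X (1, 0) with hu
  set v : Bpoly := X (1, 1) with hv
  set a : Bpoly := X (2, 0) with ha
  set b : Bpoly := X (2, 1) with hb
  set I₁ : Ideal Bpoly := Ideal.span {u, v} with hI₁
  set I₂ : Ideal Bpoly := Ideal.span {u + a, v + b} with hI₂
  set I₃ : Ideal Bpoly := Ideal.span {a, b} with hI₃
  have notmem : ∀ i : Fin 3 × Fin 2, i.1 ≠ 2 → i ∉ Svars := by
    intro i hi h
    simp only [Svars, Set.mem_insert_iff, Set.mem_singleton_iff] at h
    rcases h with rfl | rfl <;> exact hi rfl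
  have e20 : killS Svars a = 0 := killS_X_mem (Set.mem_insert _ _)
  have e21 : killS Svars b = 0 :=
    killS_X_mem (Set.mem_insert_iff.mpr (Or.inr rfl))
  have e10 : killS Svars u = u := killS_X_notMem (notmem _ (by decide))
  have e11 : killS Svars v = v := killS_X_notMem (notmem _ (by decide))
  apply le_antisymm
  · intro f hf
    obtain ⟨hf', h23⟩ := Ideal.mem_inf.mp hf
    obtain ⟨h12, h13⟩ := Ideal.mem_inf.mp hf'
    have hJ : f ∈ Ideal.span {u * (u + a), u * (v + b), v * (u + a), v * (v + b)} := by
      rw [← lemmaA]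
      exact Ideal.mem_inf.mpr ⟨h12, h13⟩
    obtain ⟨P, Q, R', S, hrepr⟩ := mem_span_quad_repr hJ
    have hf0 : killS Svars f = 0 := (mem_span_iff_killS _ f).mp (span_row2 ▸ h23)
    have hev : killS Svars P * (u * u) + (killS Svars Q + killS Svars R') * (u * v) +
        killS Svars S * (v * v) = 0 := by
      have h := congrArg (killS Svars) hrepr
      rw [hf0] at h
      simp only [map_add, map_mul, e10, e11, e20, e21, add_zero] at h
      linear_combination -h
    obtain ⟨α, β, hP, hC, hS⟩ := syzygy ((1 : Fin 3), (0 : Fin 2)) (1, 1) (by decide)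
      (killS Svars P) (killS Svars Q + killS Svars R') (killS Svars S) hev
    have hid : f = (P - killS Svars P) * (u * (u + a)) + (Q - killS Svars Q) * (u * (v + b)) +
        (R' - killS Svars R') * (v * (u + a)) + (S - killS Svars S) * (v * (v + b)) +
        (killS Svars Q - β * v) * (u * b - v * a) := by
      linear_combination hrepr + (u * (u + a)) * hP + (v * (u + a)) * hC + (v * (v + b)) * hS
    have hker : ∀ p : Bpoly, p - killS Svars p ∈ I₃ := by
      intro p
      rw [hI₃, ha, hb, span_row2]
      exact sub_killS_mem Svars p
    have hmemM : ∀ p : Bpoly, ∀ x y : Bpoly, x ∈ I₁ → y ∈ I₂ →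
        (p - killS Svars p) * (x * y) ∈ I₁ * I₂ * I₃ := by
      intro p x y hx hy
      have h1 : x * y ∈ I₁ * I₂ := Ideal.mul_mem_mul hx hy
      have h2 : x * y * (p - killS Svars p) ∈ I₁ * I₂ * I₃ := Ideal.mul_mem_mul h1 (hker p)
      rwa [mul_comm (x * y)] at h2
    have humem : u ∈ I₁ := Ideal.subset_span (Set.mem_insert _ _)
    have hvmem : v ∈ I₁ := Ideal.subset_span (Set.mem_insert_iff.mpr (Or.inr rfl))
    have huamem : u + a ∈ I₂ := Ideal.subset_span (Set.mem_insert _ _)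
    have hvbmem : v + b ∈ I₂ := Ideal.subset_span (Set.mem_insert_iff.mpr (Or.inr rfl))
    rw [hid, Submodule.add_eq_sup]
    refine Submodule.add_mem _ (Submodule.mem_sup_left ?_) (Submodule.mem_sup_right ?_)
    · exact Ideal.add_mem _ (Ideal.add_mem _ (Ideal.add_mem _
        (hmemM P u (u + a) humem huamem) (hmemM Q u (v + b) humem hvbmem))
        (hmemM R' v (u + a) hvmem huamem)) (hmemM S v (v + b) hvmem hvbmem)
    · have : u * b - v * a ∈ Ideal.span {u * b - v * a} := Ideal.subset_span rfl
      exact Ideal.mul_mem_left _ _ this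
  · rw [Submodule.add_eq_sup]
    apply sup_le
    · calc I₁ * I₂ * I₃ ≤ (I₁ * I₂) ⊓ I₃ := Ideal.mul_le_inf
        _ ≤ (I₁ ⊓ I₂) ⊓ I₃ := inf_le_inf_right I₃ Ideal.mul_le_inf
    · rw [Ideal.span_le, Set.singleton_subset_iff]
      refine Ideal.mem_inf.mpr ⟨Ideal.mem_inf.mpr ⟨?_, ?_⟩, ?_⟩
      · exact Ideal.mem_span_pair.mpr ⟨b, -a, by ring⟩
      · exact Ideal.mem_span_pair.mpr ⟨-v, u, by ring⟩
      · exact Ideal.mem_span_pair.mpr ⟨-v, u, by ring⟩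

/-! ### Main theorem -/

/-- `I₁₂ ∩ I₁₃ ∩ I₂₃ = I₁₂·I₁₃·I₂₃ + (q)`. -/
theorem stmt15 :
    pairIdeal 0 1 ⊓ pairIdeal 0 2 ⊓ pairIdeal 1 2 =
      pairIdeal 0 1 * pairIdeal 0 2 * pairIdeal 1 2 + Ideal.span {qQuadric} := by
  have hL : Ideal.map Tsub (pairIdeal 0 1 ⊓ pairIdeal 0 2 ⊓ pairIdeal 1 2) =
      Ideal.span {(X (1, 0) : Bpoly), X (1, 1)} ⊓
        Ideal.span {X (1, 0) + X (2, 0), X (1, 1) + X (2, 1)} ⊓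
        Ideal.span {X (2, 0), X (2, 1)} := by
    rw [map_inf_of_bij Tsub Tsub_bij, map_inf_of_bij Tsub Tsub_bij,
      pairIdeal, pairIdeal, pairIdeal, map_span_pair, map_span_pair, map_span_pair,
      Tsub_gen01 0, Tsub_gen01 1, Tsub_gen02 0, Tsub_gen02 1, Tsub_gen12 0, Tsub_gen12 1]
  have hR : Ideal.map Tsub
      (pairIdeal 0 1 * pairIdeal 0 2 * pairIdeal 1 2 + Ideal.span {qQuadric}) =
      Ideal.span {(X (1, 0) : Bpoly), X (1, 1)} *
          Ideal.span {X (1, 0) + X (2, 0), X (1, 1) + X (2, 1)} *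
          Ideal.span {X (2, 0), X (2, 1)} +
        Ideal.span {X (1, 0) * X (2, 1) - X (1, 1) * X (2, 0)} := by
    rw [Ideal.add_eq_sup, Ideal.map_sup, Ideal.map_mul, Ideal.map_mul, map_span_single, Tsub_q,
      pairIdeal, pairIdeal, pairIdeal, map_span_pair, map_span_pair, map_span_pair,
      Tsub_gen01 0, Tsub_gen01 1, Tsub_gen02 0, Tsub_gen02 1, Tsub_gen12 0, Tsub_gen12 1,
      Ideal.add_eq_sup]
  calc pairIdeal 0 1 ⊓ pairIdeal 0 2 ⊓ pairIdeal 1 2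
      = Ideal.comap Tsub (Ideal.map Tsub (pairIdeal 0 1 ⊓ pairIdeal 0 2 ⊓ pairIdeal 1 2)) :=
        (Ideal.comap_map_of_bijective Tsub Tsub_bij).symm
    _ = Ideal.comap Tsub (Ideal.map Tsub
          (pairIdeal 0 1 * pairIdeal 0 2 * pairIdeal 1 2 + Ideal.span {qQuadric})) := by
        rw [hL, hR, key]
    _ = pairIdeal 0 1 * pairIdeal 0 2 * pairIdeal 1 2 + Ideal.span {qQuadric} :=
        Ideal.comap_map_of_bijective Tsub Tsub_bij

end
end
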